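/- Let G be a countable group. Then G is allosteric if and only if for every finite normal subgroup H of G the quotient group G/H is allosteric. -/

import Mathlib

open MeasureTheory Pointwise

/-- A countable group `G` is allosteric if it admits a minimal action by homeomorphisms on a
compact Hausdorff space with an ergodic invariant Borel probability measure, which is
topologically free but not essentially free. -/
def Allosteric (G : Type*) [Group G] : Prop :=
  ∃ (X : Type) (_ : TopologicalSpace X) (_ : MeasurableSpace X) (_ : MulAction G X)
    (μ : Measure X),
    CompactSpace X ∧ T2Space X ∧ BorelSpace X ∧ ContinuousConstSMul G X ∧
    IsProbabilityMeasure μ ∧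
    (∀ x : X, Dense (MulAction.orbit G x)) ∧
    (∀ (g : G) (A : Set X), μ (g • A) = μ A) ∧
    (∀ A : Set X, MeasurableSet A → (∀ g : G, g • A = A) → μ A = 0 ∨ μ A = 1) ∧
    ({x : X | MulAction.stabilizer G x = ⊥} ∈ residual X) ∧
    μ {x : X | MulAction.stabilizer G x = ⊥} ≠ 1

section QuotAct

variable {G : Type*} [Group G] (H : Subgroup G) [hN : H.Normal]
variable {X : Type*} [MulAction G X]

/-- The action of `G ⧸ H` on the space of `H`-orbits. -/
def quotAct : MulAction (G ⧸ H) (Quotient (MulAction.orbitRel H X)) where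
  smul γ q := Quotient.liftOn₂' γ q (fun g x => Quotient.mk'' (g • x)) (by
    intro g₁ x₁ g₂ x₂ hg hx
    rw [QuotientGroup.leftRel_apply] at hg
    rw [MulAction.orbitRel_apply] at hx
    obtain ⟨h, rfl⟩ := hx
    apply Quotient.sound'
    rw [MulAction.orbitRel_apply]
    refine ⟨⟨g₁ * ((h : G) * (g₁⁻¹ * g₂)⁻¹) * g₁⁻¹,
      hN.conj_mem _ (H.mul_mem h.2 (H.inv_mem hg)) _⟩, ?_⟩
    simp only [Subgroup.smul_def, ← mul_smul]
    congr 1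
    group)
  one_smul q := Quotient.inductionOn' q fun x => by
    show Quotient.mk'' ((1 : G) • x) = _
    rw [one_smul]
  mul_smul γ₁ γ₂ q := by
    induction γ₁ using Quotient.inductionOn' with | h g₁ =>
    induction γ₂ using Quotient.inductionOn' with | h g₂ =>
    induction q using Quotient.inductionOn' with | h x =>
    show Quotient.mk'' ((g₁ * g₂) • x) = Quotient.mk'' (g₁ • g₂ • x)
    rw [mul_smul]

lemma quotAct_mk_smul_mk (g : G) (x : X) :
    (quotAct H).smul (QuotientGroup.mk g) (Quotient.mk'' x) = Quotient.mk'' (g • x) := rfl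

end QuotAct

lemma Allosteric.quotient {G : Type*} [Group G] [Countable G] (hG : Allosteric G)
    (H : Subgroup G) [hN : H.Normal] (hfin : (H : Set G).Finite) :
    Allosteric (G ⧸ H) := by
  obtain ⟨X, _topo, _meas, _act, μ, hcomp, ht2, hborel, hconts, hprob, hmin, hinv, herg,
    hres, hness⟩ := hG
  haveI : Finite (↥H) := hfin.to_subtype
  haveI : Nonempty X := by
    by_contra hne
    rw [not_nonempty_iff] at hne
    have h1 : μ Set.univ = 1 := measure_univ
    rw [Set.univ_eq_empty_iff.2 hne, measure_empty] at h1
    exact zero_ne_one h1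
  -- notation for the free part
  set F : Set X := {x : X | MulAction.stabilizer G x = ⊥} with hF
  have hFmem : ∀ x : X, x ∈ F ↔ ∀ g : G, g • x = x → g = 1 := by
    intro x
    simp only [hF, Set.mem_setOf_eq, Subgroup.eq_bot_iff_forall, MulAction.mem_stabilizer_iff]
  -- Step A : H acts freely on X
  have hHfree : ∀ (x : X) (h : G), h ∈ H → h • x = x → h = 1 := by
    by_contra hcon
    push_neg at hcon
    obtain ⟨x₀, h, hhH, hfix, hne1⟩ := hcon
    set E : Set X := ⋃ g ∈ (H : Set G) \ {1}, {x : X | g • x = x} with hE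
    have hEclosed : IsClosed E :=
      Set.Finite.isClosed_biUnion (hfin.diff) fun g _ =>
        isClosed_eq (continuous_const_smul g) continuous_id
    have horb : MulAction.orbit G x₀ ⊆ E := by
      rintro - ⟨g, rfl⟩
      refine Set.mem_biUnion (show g * h * g⁻¹ ∈ (H : Set G) \ {1} from ?_) ?_
      · refine ⟨hN.conj_mem _ hhH _, ?_⟩
        simp only [Set.mem_singleton_iff]
        intro hc
        apply hne1
        have hh : h = g⁻¹ * (g * h * g⁻¹) * g := by group
        rw [hh, hc]
        group
      · show (g * h * g⁻¹) • g • x₀ = g • x₀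
        rw [← mul_smul]
        conv_rhs => rw [← hfix, ← mul_smul]
        congr 1
        group
    have hEuniv : E = Set.univ := by
      have : Dense E := (hmin x₀).mono horb
      exact hEclosed.closure_eq ▸ this.closure_eq
    have hFdense : Dense F := dense_of_mem_residual hres
    obtain ⟨x, hx⟩ := hFdense.nonempty
    have hxE : x ∈ E := hEuniv ▸ Set.mem_univ x
    obtain ⟨g, hg, hgx⟩ := Set.mem_iUnion₂.1 hxE
    exact hg.2 ((hFmem x).1 hx g hgx)
  -- Step B : set up the quotient space
  letI R := MulAction.orbitRel (↥H) X
  letI Q := Quotient R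
  letI : MeasurableSpace Q := borel Q
  haveI hborelQ : BorelSpace Q := ⟨rfl⟩
  letI mact : MulAction (G ⧸ H) Q := quotAct H
  set π : X → Q := Quotient.mk'' with hπ
  have hπcont : Continuous π := continuous_quotient_mk'
  have hπsurj : Function.Surjective π := Quotient.mk''_surjective
  have hπmeas : Measurable π := hπcont.measurable
  have hsmul_mk : ∀ (g : G) (x : X), (QuotientGroup.mk g : G ⧸ H) • π x = π (g • x) :=
    fun g x => rfl
  have hpre_smul : ∀ (g : G) (A : Set Q),
      π ⁻¹' ((QuotientGroup.mk g : G ⧸ H) • A) = g • (π ⁻¹' A) := by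
    intro g A
    ext x
    simp only [Set.mem_preimage, Set.mem_smul_set_iff_inv_smul_mem]
    have hq : ((QuotientGroup.mk g : G ⧸ H))⁻¹ • π x = π (g⁻¹ • x) := by
      have h1 : ((QuotientGroup.mk g : G ⧸ H))⁻¹ = QuotientGroup.mk g⁻¹ := by
        simp
      rw [h1]
      exact hsmul_mk g⁻¹ x
    rw [hq]
  haveI : ContinuousConstSMul (↥H) X := ⟨fun h => continuous_const_smul (h : G)⟩
  haveI : ProperlyDiscontinuousSMul (↥H) X := ⟨fun {K L} _ _ => Set.toFinite _⟩
  haveI : CompactSpace Q := Quotient.compactSpace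
  haveI : T2Space Q := t2Space_of_properlyDiscontinuousSMul_of_t2Space
  haveI hcsmulQ : ContinuousConstSMul (G ⧸ H) Q := by
    constructor
    intro γ
    induction γ using Quotient.inductionOn' with | h g =>
    have : ((QuotientGroup.mk g : G ⧸ H) • · : Q → Q) ∘ π = π ∘ (g • ·) := by
      funext x; exact hsmul_mk g x
    exact isQuotientMap_quotient_mk'.continuous_iff.2
      (this ▸ hπcont.comp (continuous_const_smul g))
  haveI : Countable (G ⧸ H) := Quotient.countable
  -- the measure
  set ν : Measure Q := Measure.map π μ with hν
  haveI hprobQ : IsProbabilityMeasure ν := Measure.isProbabilityMeasure_map hπmeas.aemeasurable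
  -- invariance of ν
  have hsmul_meas : ∀ (γ : G ⧸ H) (A : Set Q), MeasurableSet A → ν (γ • A) = ν A := by
    intro γ A hA
    induction γ using Quotient.inductionOn' with | h g =>
    have hAs : MeasurableSet ((QuotientGroup.mk g : G ⧸ H) • A) :=
      ((Homeomorph.smul (QuotientGroup.mk g : G ⧸ H)).toMeasurableEquiv.measurableSet_image).2 hA
    rw [hν, Measure.map_apply hπmeas hAs, Measure.map_apply hπmeas hA, hpre_smul, hinv]
  have hinvQ : ∀ (γ : G ⧸ H) (A : Set Q), ν (γ • A) = ν A := by
    intro γ A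
    set e : Q ≃ᵐ Q := (Homeomorph.smul γ).toMeasurableEquiv with he
    have hmap : Measure.map e ν = ν := by
      refine Measure.ext fun s hs => ?_
      rw [MeasurableEquiv.map_apply]
      have hpre : e ⁻¹' s = γ⁻¹ • s := by
        ext q
        rw [Set.mem_smul_set_iff_inv_smul_mem, inv_inv]
        rfl
      rw [hpre]
      exact hsmul_meas γ⁻¹ s hs
    have : ν (γ • A) = Measure.map e ν (γ • A) := by rw [hmap]
    rw [this, MeasurableEquiv.map_apply]
    congr 1
    ext q
    show γ • q ∈ γ • A ↔ q ∈ A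
    exact Set.smul_mem_smul_set_iff
  -- ergodicity
  have hergQ : ∀ A : Set Q, MeasurableSet A → (∀ γ : G ⧸ H, γ • A = A) → ν A = 0 ∨ ν A = 1 := by
    intro A hA hinvA
    have hBmeas : MeasurableSet (π ⁻¹' A) := hπmeas hA
    have hBinv : ∀ g : G, g • (π ⁻¹' A) = π ⁻¹' A := by
      intro g
      rw [← hpre_smul, hinvA]
    have := herg (π ⁻¹' A) hBmeas hBinv
    rw [hν, Measure.map_apply hπmeas hA]
    exact this
  -- minimality
  have hminQ : ∀ q : Q, Dense (MulAction.orbit (G ⧸ H) q) := by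
    intro q
    induction q using Quotient.inductionOn' with | h x =>
    have hsub : π '' MulAction.orbit G x ⊆ MulAction.orbit (G ⧸ H) (π x) := by
      rintro - ⟨-, ⟨g, rfl⟩, rfl⟩
      exact ⟨QuotientGroup.mk g, (hsmul_mk g x).symm ▸ rfl⟩
    exact (hπsurj.denseRange.dense_image hπcont (hmin x)).mono hsub
  -- the free part downstairs
  set FQ : Set Q := {q : Q | MulAction.stabilizer (G ⧸ H) q = ⊥} with hFQ
  have hFQmem : ∀ q : Q, q ∈ FQ ↔ ∀ γ : G ⧸ H, γ • q = q → γ = 1 := by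
    intro q
    simp only [hFQ, Set.mem_setOf_eq, Subgroup.eq_bot_iff_forall, MulAction.mem_stabilizer_iff]
  -- key : π ⁻¹' FQ = F
  have hkey : π ⁻¹' FQ = F := by
    ext x
    rw [Set.mem_preimage, hFQmem, hFmem]
    constructor
    · intro hx g hg
      have : (QuotientGroup.mk g : G ⧸ H) = 1 := hx _ (by rw [hsmul_mk, hg])
      have hgH : g ∈ H := (QuotientGroup.eq_one_iff g).1 this
      exact hHfree x g hgH hg
    · intro hx γ hγ
      induction γ using Quotient.inductionOn' with | h g =>
      have : π (g • x) = π x := by rw [← hsmul_mk]; exact hγ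
      have hrel : g • x ∈ MulAction.orbit (↥H) x := by
        rw [← MulAction.orbitRel_apply]
        exact Quotient.exact' this
      obtain ⟨h, hh⟩ := hrel
      have hh' : (h : G) • x = g • x := hh
      have hfix2 : ((h : G)⁻¹ * g) • x = x := by
        rw [mul_smul, ← hh', inv_smul_smul]
      have hg1 : (h : G)⁻¹ * g = 1 := hx _ hfix2
      have hgH : g ∈ H := by
        have hgh : g = (h : G) := by
          have h2 := congrArg (fun z => (h : G) * z) hg1
          simpa [← mul_assoc] using h2
        exact hgh ▸ h.2
      exact (QuotientGroup.eq_one_iff g).2 hgH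
  -- measurability of FQ
  have hFQmeas : MeasurableSet FQ := by
    have : FQ = (⋃ γ ∈ {γ : G ⧸ H | γ ≠ 1}, {q : Q | γ • q = q})ᶜ := by
      ext q
      rw [hFQmem]
      simp only [Set.mem_compl_iff, Set.mem_iUnion, Set.mem_setOf_eq, not_exists]
      constructor
      · intro hq γ hne hfixq
        exact hne (hq γ hfixq)
      · intro hq γ hγ
        by_contra h1
        exact hq γ h1 hγ
    rw [this]
    refine (MeasurableSet.biUnion (Set.to_countable _) fun γ _ => ?_).compl
    exact (isClosed_eq (continuous_const_smul γ) continuous_id).measurableSet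
  -- non essential freeness
  have hnessQ : ν FQ ≠ 1 := by
    rw [hν, Measure.map_apply hπmeas hFQmeas, hkey]
    exact hness
  -- topological freeness
  have hresQ : FQ ∈ residual Q := by
    obtain ⟨S, hSopen, hSdense, hScount, hSsub⟩ := mem_residual_iff.1 hres
    have hmeagre : IsMeagre FQᶜ := by
      rw [isMeagre_iff_countable_union_isNowhereDense]
      refine ⟨(fun t => π '' tᶜ) '' S, ?_, hScount.image _, ?_⟩
      · rintro - ⟨t, htS, rfl⟩
        -- π '' tᶜ is nowhere dense
        have htc : IsClosed tᶜ := (hSopen t htS).isClosed_compl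
        have hsat : π ⁻¹' (π '' tᶜ) = ⋃ h : ↥H, (h • ·) '' tᶜ :=
          MulAction.quotient_preimage_image_eq_union_mul tᶜ
        have hclosed : IsClosed (π '' tᶜ) := by
          rw [← isQuotientMap_quotient_mk'.isClosed_preimage]
          show IsClosed (π ⁻¹' (π '' tᶜ))
          rw [hsat]
          exact isClosed_iUnion_of_finite fun h =>
            (Homeomorph.smul ((h : G))).isClosedMap _ htc
        rw [hclosed.isNowhereDense_iff]
        rw [Set.eq_empty_iff_forall_notMem]
        intro q₀ hq₀
        have hW : Dense (⋂ h : ↥H, (fun x => (h : G) • x) '' t) := by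
          refine dense_iInter_of_isOpen
            (fun h => (Homeomorph.smul ((h : G))).isOpenMap _ (hSopen t htS))
            (fun h => ?_)
          exact (Homeomorph.smul ((h : G))).surjective.denseRange.dense_image
            (continuous_const_smul _) (hSdense t htS)
        obtain ⟨x₁, hx₁⟩ := hπsurj q₀
        have hVopen : IsOpen (π ⁻¹' interior (π '' tᶜ)) := isOpen_interior.preimage hπcont
        have hVne : (π ⁻¹' interior (π '' tᶜ)).Nonempty :=
          ⟨x₁, by rw [Set.mem_preimage, hx₁]; exact hq₀⟩
        obtain ⟨x, hxV, hxW⟩ := hW.inter_open_nonempty _ hVopen hVne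
        have hximg : π x ∈ π '' tᶜ := interior_subset hxV
        have hxu : x ∈ ⋃ h : ↥H, (fun y => h • y) '' tᶜ := by
          rw [← hsat]
          exact hximg
        obtain ⟨h, hxh⟩ := Set.mem_iUnion.1 hxu
        have hx_in : x ∈ (fun y => (h : G) • y) '' t := Set.mem_iInter.1 hxW h
        obtain ⟨y, hy, hyx⟩ := hxh
        obtain ⟨z, hz, hzx⟩ := hx_in
        have hyz : y = z := by
          have hc : (h : G) • y = (h : G) • z := by
            show (h : G) • y = (h : G) • z
            calc (h : G) • y = h • y := rfl
            _ = x := hyx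
            _ = (h : G) • z := hzx.symm
          exact smul_left_cancel _ hc
        exact hy (hyz ▸ hz)
      · rintro q hq
        obtain ⟨x, rfl⟩ := hπsurj q
        have hxF : x ∉ F := by
          intro hxF
          apply hq
          show π x ∈ FQ
          rw [← hkey] at hxF
          exact hxF
        have hxS : x ∉ ⋂₀ S := fun hx => hxF (hSsub hx)
        rw [Set.mem_sInter] at hxS
        push_neg at hxS
        obtain ⟨t, htS, hxt⟩ := hxS
        exact Set.mem_sUnion.2 ⟨π '' tᶜ, ⟨t, htS, rfl⟩, ⟨x, hxt, rfl⟩⟩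
    rw [IsMeagre] at hmeagre
    rwa [compl_compl] at hmeagre
  exact ⟨Q, inferInstance, inferInstance, mact, ν, inferInstance, inferInstance, hborelQ,
    hcsmulQ, hprobQ, hminQ, hinvQ, hergQ, hresQ, hnessQ⟩

lemma allosteric_of_quotient_bot {G : Type*} [Group G]
    (h : Allosteric (G ⧸ (⊥ : Subgroup G))) : Allosteric G := by
  obtain ⟨X, topo, meas, act, μ, hcomp, ht2, hborel, hconts, hprob, hmin, hinv, herg,
    hres, hness⟩ := h
  set φ : G →* G ⧸ (⊥ : Subgroup G) := QuotientGroup.mk' ⊥ with hφ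
  have hφsurj : Function.Surjective φ := QuotientGroup.mk'_surjective ⊥
  have hφinj : Function.Injective φ := by
    rw [← MonoidHom.ker_eq_bot_iff]
    exact QuotientGroup.ker_mk' ⊥
  letI act2 : MulAction G X := MulAction.compHom X φ
  have hsmul : ∀ (g : G) (x : X), g • x = φ g • x := fun g x => rfl
  have hset : ∀ (g : G) (A : Set X), g • A = φ g • A := fun g A => rfl
  have hstab : {x : X | MulAction.stabilizer G x = ⊥} =
      {x : X | MulAction.stabilizer (G ⧸ (⊥ : Subgroup G)) x = ⊥} := by
    ext x
    simp only [Set.mem_setOf_eq, Subgroup.eq_bot_iff_forall, MulAction.mem_stabilizer_iff]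
    constructor
    · intro hx γ hγ
      obtain ⟨g, rfl⟩ := hφsurj γ
      have hg : g • x = x := by rw [hsmul]; exact hγ
      rw [hx g hg]
      exact φ.map_one
    · intro hx g hg
      apply hφinj
      rw [φ.map_one]
      exact hx (φ g) (by rw [← hsmul]; exact hg)
  have horb : ∀ x : X, MulAction.orbit G x = MulAction.orbit (G ⧸ (⊥ : Subgroup G)) x := by
    intro x
    ext y
    constructor
    · rintro ⟨g, rfl⟩
      exact ⟨φ g, rfl⟩
    · rintro ⟨γ, rfl⟩
      obtain ⟨g, rfl⟩ := hφsurj γ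
      exact ⟨g, rfl⟩
  have hcont2 : ContinuousConstSMul G X := by
    constructor
    intro g
    show Continuous fun x : X => φ g • x
    exact continuous_const_smul (φ g)
  refine ⟨X, topo, meas, act2, μ, hcomp, ht2, hborel, hcont2, hprob,
    fun x => ?_, fun g A => ?_, fun A hA hAinv => ?_, ?_, ?_⟩
  · rw [horb x]; exact hmin x
  · rw [hset]; exact hinv (φ g) A
  · refine herg A hA fun γ => ?_
    obtain ⟨g, rfl⟩ := hφsurj γ
    rw [← hset]
    exact hAinv g
  · rw [hstab]; exact hres
  · rw [hstab]; exact hness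

/-- A countable group `G` is allosteric if and only if for every finite normal subgroup `H` of
`G`, the quotient `G/H` is allosteric. -/
theorem stmt16 {G : Type*} [Group G] [Countable G] :
    Allosteric G ↔
      ∀ (H : Subgroup G) (_ : H.Normal), (H : Set G).Finite → Allosteric (G ⧸ H) := by
  constructor
  · intro hG H hN hfin
    exact @Allosteric.quotient G _ _ hG H hN hfin
  · intro h
    exact allosteric_of_quotient_bot
      (h ⊥ inferInstance (by rw [Subgroup.coe_bot]; exact Set.finite_singleton 1))
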